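/- Let (M₁,e₁), (M₂,e₂) be objects as above (bounded injective maps into H), let e : M₁ ⊕ M₂ → H be e(ξ,η) = e₁ξ + e₂η, and set M₁ ∨ M₂ = (ker e)^⊥ with structure map e restricted. Then the maps ε_j = P_{(ker e)^⊥} ∘ ι_j (ι_j the canonical inclusions) satisfy e ∘ ε_j = e_j, are injective, and (M₁ ∨ M₂, e|_{(ker e)^⊥}) together with ε₁, ε₂ is a coproduct of (M₁,e₁) and (M₂,e₂) in the category: for any (N,f) with morphisms θ_j : (M_j,e_j) → (N,f) there is a unique morphism θ̃ : M₁ ∨ M₂ → N with θ̃ ∘ ε_j = θ_j. -/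

import Mathlib

universe u

/-- In the slice category of pairs `(M, e)` of a Hilbert space with a bounded
injective linear map into a fixed Hilbert space `H` (morphisms: bounded injective maps
intertwining structure maps), the join `(M₁ ∨ M₂, e|)` — the orthogonal complement of the kernel
of `e : M₁ ⊕₂ M₂ → H`, `e(ξ,η) = e₁ ξ + e₂ η`, with the restricted structure map — together with
the maps `ε_j = P_{(ker e)ᗮ} ∘ ι_j`, is a coproduct: the `ε_j` satisfy `e ∘ ε_j = e_j`, are
injective, and for any object `(N, f)` with morphisms `θ_j : (M_j, e_j) → (N, f)` there is a
unique morphism `θ̃ : M₁ ∨ M₂ → N` with `θ̃ ∘ ε_j = θ_j`. -/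
theorem join_is_coproduct
    {H M₁ M₂ : Type*}
    [NormedAddCommGroup H] [InnerProductSpace ℂ H] [CompleteSpace H]
    [NormedAddCommGroup M₁] [InnerProductSpace ℂ M₁] [CompleteSpace M₁]
    [NormedAddCommGroup M₂] [InnerProductSpace ℂ M₂] [CompleteSpace M₂]
    (e₁ : M₁ →L[ℂ] H) (e₂ : M₂ →L[ℂ] H)
    (h₁ : Function.Injective e₁) (h₂ : Function.Injective e₂)
    (e : WithLp 2 (M₁ × M₂) →L[ℂ] H)
    (he : ∀ p, e p = e₁ (WithLp.equiv 2 (M₁ × M₂) p).1 + e₂ (WithLp.equiv 2 (M₁ × M₂) p).2)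
    [Submodule.HasOrthogonalProjection (LinearMap.ker e.toLinearMap)] :
    (∀ ξ : M₁, e ((Submodule.orthogonalProjectionOnto (LinearMap.ker e.toLinearMap)ᗮ
        ((WithLp.equiv 2 (M₁ × M₂)).symm (ξ, 0)) : (LinearMap.ker e.toLinearMap)ᗮ) : WithLp 2 (M₁ × M₂)) =
        e₁ ξ) ∧
    (∀ η : M₂, e ((Submodule.orthogonalProjectionOnto (LinearMap.ker e.toLinearMap)ᗮ
        ((WithLp.equiv 2 (M₁ × M₂)).symm (0, η)) : (LinearMap.ker e.toLinearMap)ᗮ) : WithLp 2 (M₁ × M₂)) =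
        e₂ η) ∧
    Function.Injective (fun ξ : M₁ => Submodule.orthogonalProjectionOnto (LinearMap.ker e.toLinearMap)ᗮ
        ((WithLp.equiv 2 (M₁ × M₂)).symm (ξ, 0))) ∧
    Function.Injective (fun η : M₂ => Submodule.orthogonalProjectionOnto (LinearMap.ker e.toLinearMap)ᗮ
        ((WithLp.equiv 2 (M₁ × M₂)).symm (0, η))) ∧
    (∀ (N : Type u) (_ : NormedAddCommGroup N), ∀ (_ : InnerProductSpace ℂ N)
        (_ : CompleteSpace N) (f : N →L[ℂ] H), Function.Injective f →
      ∀ (θ₁ : M₁ →L[ℂ] N) (θ₂ : M₂ →L[ℂ] N),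
        Function.Injective θ₁ → Function.Injective θ₂ →
        f.comp θ₁ = e₁ → f.comp θ₂ = e₂ →
        ∃! θ : ↥((LinearMap.ker e.toLinearMap)ᗮ) →L[ℂ] N,
          Function.Injective θ ∧
          (∀ q : ↥((LinearMap.ker e.toLinearMap)ᗮ), f (θ q) = e (q : WithLp 2 (M₁ × M₂))) ∧
          (∀ ξ : M₁, θ (Submodule.orthogonalProjectionOnto (LinearMap.ker e.toLinearMap)ᗮ
              ((WithLp.equiv 2 (M₁ × M₂)).symm (ξ, 0))) = θ₁ ξ) ∧
          (∀ η : M₂, θ (Submodule.orthogonalProjectionOnto (LinearMap.ker e.toLinearMap)ᗮ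
              ((WithLp.equiv 2 (M₁ × M₂)).symm (0, η))) = θ₂ η)) := by
  classical
  set K := (LinearMap.ker e.toLinearMap)ᗮ with hK
  -- Key: e agrees with e ∘ P_K
  have hkey : ∀ v : WithLp 2 (M₁ × M₂), e ((K.orthogonalProjectionOnto v : K) : WithLp 2 (M₁ × M₂)) = e v := by
    intro v
    have hmem : v - (K.orthogonalProjectionOnto v : WithLp 2 (M₁ × M₂)) ∈ Kᗮ :=
      K.sub_starProjection_mem_orthogonal v
    have hmem2 : v - (K.orthogonalProjectionOnto v : WithLp 2 (M₁ × M₂)) ∈ LinearMap.ker e.toLinearMap := by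
      exact (Submodule.orthogonal_orthogonal (LinearMap.ker e.toLinearMap)).le hmem
    have : e (v - (K.orthogonalProjectionOnto v : WithLp 2 (M₁ × M₂))) = 0 := hmem2
    rw [map_sub, sub_eq_zero] at this
    exact this.symm
  have he1 : ∀ ξ : M₁, e ((WithLp.equiv 2 (M₁ × M₂)).symm (ξ, 0)) = e₁ ξ := by
    intro ξ; rw [he]; simp
  have he2 : ∀ η : M₂, e ((WithLp.equiv 2 (M₁ × M₂)).symm (0, η)) = e₂ η := by
    intro η; rw [he]; simp
  refine ⟨fun ξ => by rw [hkey, he1], fun η => by rw [hkey, he2], ?_, ?_, ?_⟩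
  · intro ξ ξ' hξ
    apply h₁
    have := congrArg (fun q : K => e (q : WithLp 2 (M₁ × M₂))) hξ
    exact (he1 ξ).symm.trans ((hkey _).symm.trans (this.trans ((hkey _).trans (he1 ξ'))))
  · intro η η' hη
    apply h₂
    have := congrArg (fun q : K => e (q : WithLp 2 (M₁ × M₂))) hη
    exact (he2 η).symm.trans ((hkey _).symm.trans (this.trans ((hkey _).trans (he2 η'))))
  · intro N _ _ _ f hf θ₁ θ₂ hθ₁ hθ₂ hfθ₁ hfθ₂
    -- build g : WithLp 2 (M₁ × M₂) →L N
    set g : WithLp 2 (M₁ × M₂) →L[ℂ] N :=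
      (θ₁.comp (ContinuousLinearMap.fst ℂ M₁ M₂) + θ₂.comp (ContinuousLinearMap.snd ℂ M₁ M₂)).comp
        (WithLp.prodContinuousLinearEquiv 2 ℂ M₁ M₂ : WithLp 2 (M₁ × M₂) →L[ℂ] M₁ × M₂) with hg
    have hgapp : ∀ v : WithLp 2 (M₁ × M₂),
        g v = θ₁ (WithLp.equiv 2 (M₁ × M₂) v).1 + θ₂ (WithLp.equiv 2 (M₁ × M₂) v).2 := by
      intro v; rfl
    have hfg : ∀ v : WithLp 2 (M₁ × M₂), f (g v) = e v := by
      intro v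
      rw [hgapp, map_add, he, ← hfθ₁, ← hfθ₂]
      rfl
    have hgker : ∀ v ∈ LinearMap.ker e.toLinearMap, g v = 0 := by
      intro v hv
      apply hf
      rw [hfg, map_zero]
      exact hv
    set θ : K →L[ℂ] N := g.comp K.subtypeL with hθ
    have hθapp : ∀ q : K, θ q = g (q : WithLp 2 (M₁ × M₂)) := fun q => rfl
    have hcompat : ∀ q : K, f (θ q) = e (q : WithLp 2 (M₁ × M₂)) := fun q => hfg _
    have hgproj : ∀ v : WithLp 2 (M₁ × M₂),
        g ((K.orthogonalProjectionOnto v : K) : WithLp 2 (M₁ × M₂)) = g v := by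
      intro v
      have hmem : v - (K.orthogonalProjectionOnto v : WithLp 2 (M₁ × M₂)) ∈ Kᗮ :=
        K.sub_starProjection_mem_orthogonal v
      have hmem2 : v - (K.orthogonalProjectionOnto v : WithLp 2 (M₁ × M₂)) ∈ LinearMap.ker e.toLinearMap := by
        exact (Submodule.orthogonal_orthogonal (LinearMap.ker e.toLinearMap)).le hmem
      have := hgker _ hmem2
      rw [map_sub, sub_eq_zero] at this
      exact this.symm
    refine ⟨θ, ⟨?_, hcompat, ?_, ?_⟩, ?_⟩
    · -- injectivity
      intro q q' hq
      have h0 : e ((q : WithLp 2 (M₁ × M₂)) - (q' : WithLp 2 (M₁ × M₂))) = 0 := by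
        have : f (θ q) = f (θ q') := congrArg f hq
        rw [hcompat, hcompat] at this
        rw [map_sub, sub_eq_zero]; exact this
      have hmemk : ((q : WithLp 2 (M₁ × M₂)) - (q' : WithLp 2 (M₁ × M₂))) ∈ LinearMap.ker e.toLinearMap := h0
      have hmemK : ((q : WithLp 2 (M₁ × M₂)) - (q' : WithLp 2 (M₁ × M₂))) ∈ K :=
        K.sub_mem q.2 q'.2
      have : ((q : WithLp 2 (M₁ × M₂)) - (q' : WithLp 2 (M₁ × M₂))) = 0 := by
        have := hmemK _ hmemk
        rwa [inner_self_eq_zero] at this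
      exact Subtype.ext (sub_eq_zero.mp this)
    · intro ξ
      rw [hθapp, hgproj, hgapp]
      simp
    · intro η
      rw [hθapp, hgproj, hgapp]
      simp
    · intro θ' ⟨_, hc', _, _⟩
      ext q
      apply hf
      rw [hc', hcompat]
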